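/- arXiv:1209.5991 — 4 statements merged into one kernel-verified Lean document; each statement's English description precedes it below -/
import Mathlib

section
/- For a Gaussian free field on a finite connected weighted graph, the effective resistance function is supermodular in the observed set: for any vertex set S, any distinct x,y ∉ S, and any vertex t, R_eff(t, S) + R_eff(t, S∪{x,y}) ≥ R_eff(t, S∪{x}) + R_eff(t, S∪{y}), where R_eff(t, A) is the effective resistance between t and the set A (taken to be 0 if t ∈ A). -/
open scoped ENNReal

set_option linter.unusedSectionVars false
set_option linter.unnecessarySeqFocus false

variable {V : Type*} [Fintype V] [DecidableEq V]

/-- A unit flow from the set `A` to the vertex `t`. -/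
def IsUnitFlow (A : Finset V) (t : V) (f : V → V → ℝ) : Prop :=
  (∀ i j, f i j = - f j i) ∧
  (∀ i, i ∉ A → i ≠ t → ∑ j, f i j = 0) ∧
  (∑ j, f j t = 1)

/-- The energy `(1/2) ∑_{i,j} f(i,j)² r(i,j)` of a flow `f` w.r.t. resistances `r`. -/
noncomputable def energy (r f : V → V → ℝ) : ℝ :=
  (1 / 2) * ∑ i, ∑ j, (f i j) ^ 2 * r i j

/-- Effective resistance between `t` and the set `A` in the network `(G, r)`, by Thomson's
principle: the infimum of energies of unit flows from `A` to `t` supported on edges of `G`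
(`0` if `t ∈ A`). -/
noncomputable def Reff (G : SimpleGraph V) (r : V → V → ℝ) (A : Finset V) (t : V) : ℝ≥0∞ :=
  if t ∈ A then 0
  else ⨅ f : {f : V → V → ℝ // IsUnitFlow A t f ∧ ∀ i j, ¬ G.Adj i j → f i j = 0},
    ENNReal.ofReal (energy r f.1)

open Classical in
/-- conductance -/
noncomputable def aW (G : SimpleGraph V) (r : V → V → ℝ) (i j : V) : ℝ :=
  if G.Adj i j then (r i j)⁻¹ else 0

noncomputable def fPot (G : SimpleGraph V) (r : V → V → ℝ) (φ : V → ℝ) (i j : V) : ℝ :=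
  (φ i - φ j) * aW G r i j

noncomputable def lap (G : SimpleGraph V) (r : V → V → ℝ) (φ : V → ℝ) (v : V) : ℝ :=
  ∑ j, (φ v - φ j) * aW G r v j

noncomputable def ip (r : V → V → ℝ) (f g : V → V → ℝ) : ℝ :=
  ∑ i, ∑ j, f i j * g i j * r i j

section basic

variable {G : SimpleGraph V} {r : V → V → ℝ}

lemma aW_nonneg (hrpos : ∀ i j, G.Adj i j → 0 < r i j) (i j : V) : 0 ≤ aW G r i j := by
  unfold aW; split
  · exact le_of_lt (inv_pos.mpr (hrpos i j ‹_›))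
  · exact le_refl 0

lemma aW_pos (hrpos : ∀ i j, G.Adj i j → 0 < r i j) {i j : V} (h : G.Adj i j) :
    0 < aW G r i j := by
  unfold aW; rw [if_pos h]; exact inv_pos.mpr (hrpos i j h)

lemma aW_symm (hrsym : ∀ i j, r i j = r j i) (i j : V) : aW G r i j = aW G r j i := by
  unfold aW
  by_cases h : G.Adj i j
  · rw [if_pos h, if_pos h.symm, hrsym]
  · rw [if_neg h, if_neg fun h' => h h'.symm]

lemma aW_eq_zero {i j : V} (h : ¬ G.Adj i j) : aW G r i j = 0 := by
  unfold aW; rw [if_neg h]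

lemma aW_mul_r (hrpos : ∀ i j, G.Adj i j → 0 < r i j) {i j : V} (h : G.Adj i j) :
    aW G r i j * r i j = 1 := by
  unfold aW; rw [if_pos h]; exact inv_mul_cancel₀ (ne_of_gt (hrpos i j h))

lemma fPot_antisymm (hrsym : ∀ i j, r i j = r j i) (φ : V → ℝ) (i j : V) :
    fPot G r φ i j = - fPot G r φ j i := by
  unfold fPot; rw [aW_symm hrsym i j]; ring

lemma fPot_supp (φ : V → ℝ) (i j : V) (h : ¬ G.Adj i j) : fPot G r φ i j = 0 := by
  unfold fPot; rw [aW_eq_zero h, mul_zero]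

lemma div_fPot (φ : V → ℝ) (v : V) : ∑ j, fPot G r φ v j = lap G r φ v := rfl

/-- key pairing identity -/
lemma pairing (hrpos : ∀ i j, G.Adj i j → 0 < r i j) (φ : V → ℝ) (g : V → V → ℝ)
    (hga : ∀ i j, g i j = - g j i) (hgs : ∀ i j, ¬ G.Adj i j → g i j = 0) :
    ip r (fPot G r φ) g = 2 * ∑ i, φ i * ∑ j, g i j := by
  have key : ∀ i j, fPot G r φ i j * g i j * r i j = (φ i - φ j) * g i j := by
    intro i j
    by_cases h : G.Adj i j
    · unfold fPot
      rw [mul_assoc, mul_comm (g i j) (r i j), ← mul_assoc, mul_assoc _ (aW G r i j),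
        aW_mul_r hrpos h, mul_one]
    · rw [hgs i j h, fPot_supp φ i j h]; ring
  unfold ip
  rw [Finset.sum_congr rfl fun i _ => Finset.sum_congr rfl fun j _ => key i j]
  have expand : ∀ i j : V, (φ i - φ j) * g i j = φ i * g i j - φ j * g i j := by
    intro i j; ring
  simp only [expand, Finset.sum_sub_distrib]
  rw [Finset.sum_comm (f := fun i j => φ j * g i j)]
  have h2 : ∀ j : V, ∑ i : V, φ j * g i j = - (φ j * ∑ i : V, g j i) := by
    intro j
    rw [← Finset.mul_sum, ← mul_neg]
    congr 1
    rw [← Finset.sum_neg_distrib]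
    exact Finset.sum_congr rfl fun i _ => (hga i j)
  rw [Finset.sum_congr rfl fun j _ => h2 j]
  simp only [Finset.mul_sum, Finset.sum_neg_distrib, sub_neg_eq_add]
  rw [← Finset.sum_add_distrib]
  refine Finset.sum_congr rfl fun i _ => ?_
  rw [← Finset.sum_add_distrib]
  exact Finset.sum_congr rfl fun j _ => by ring
end basic

section mp
variable {G : SimpleGraph V} {r : V → V → ℝ}

lemma walk_const (φ : V → ℝ) (hc : ∀ i j, G.Adj i j → φ i = φ j) :
    ∀ {u v : V}, G.Walk u v → φ u = φ v := by
  intro u v p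
  induction p with
  | nil => rfl
  | cons h q ih => exact (hc _ _ h).trans ih

lemma max_principle (hconn : G.Connected) (hrpos : ∀ i j, G.Adj i j → 0 < r i j)
    (B : Finset V) (b₀ : V) (hb₀ : b₀ ∈ B) (φ : V → ℝ)
    (hbd : ∀ v ∈ B, φ v ≤ 0) (hsub : ∀ v ∉ B, lap G r φ v ≤ 0) :
    ∀ v, φ v ≤ 0 := by
  obtain ⟨vM, -, hvM⟩ := Finset.exists_max_image Finset.univ φ ⟨b₀, Finset.mem_univ b₀⟩
  have hvM' : ∀ u, φ u ≤ φ vM := fun u => hvM u (Finset.mem_univ u)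
  suffices h : φ vM ≤ 0 by exact fun v => le_trans (hvM' v) h
  have aux : ∀ (u : V), G.Walk u b₀ → φ u = φ vM → φ vM ≤ 0 := by
    intro u p
    induction p with
    | nil => intro hu; rw [← hu]; exact hbd _ hb₀
    | @cons a c d hac q ih =>
      intro hu
      by_cases haB : a ∈ B
      · rw [← hu]; exact hbd _ haB
      · have hterm : ∀ j ∈ Finset.univ, 0 ≤ (φ a - φ j) * aW G r a j := by
          intro j _
          exact mul_nonneg (by rw [hu]; linarith [hvM' j]) (aW_nonneg hrpos a j)
        have hz : ∑ j, (φ a - φ j) * aW G r a j = 0 :=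
          le_antisymm (hsub a haB) (Finset.sum_nonneg hterm)
        have hall := (Finset.sum_eq_zero_iff_of_nonneg hterm).mp hz c (Finset.mem_univ c)
        have : φ a - φ c = 0 := by
          rcases mul_eq_zero.mp hall with h | h
          · exact h
          · exact absurd h (ne_of_gt (aW_pos hrpos hac))
        exact ih hb₀ (by rw [← hu]; linarith)
  exact aux vM ((hconn.preconnected vM b₀).some) rfl
end mp

section solver
variable {G : SimpleGraph V} {r : V → V → ℝ}

lemma lap_add (φ ψ : V → ℝ) (v : V) :
    lap G r (φ + ψ) v = lap G r φ v + lap G r ψ v := by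
  unfold lap
  rw [← Finset.sum_add_distrib]
  exact Finset.sum_congr rfl fun j _ => by simp [Pi.add_apply]; ring

lemma lap_smul (c : ℝ) (φ : V → ℝ) (v : V) :
    lap G r (c • φ) v = c * lap G r φ v := by
  unfold lap
  rw [Finset.mul_sum]
  exact Finset.sum_congr rfl fun j _ => by simp [Pi.smul_apply, smul_eq_mul]; ring

lemma lap_zero_of_dirichlet (hconn : G.Connected) (hrsym : ∀ i j, r i j = r j i)
    (hrpos : ∀ i j, G.Adj i j → 0 < r i j)
    (B : Finset V) (b₀ : V) (hb₀ : b₀ ∈ B) (φ : V → ℝ)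
    (hφB : ∀ v ∈ B, φ v = 0) (hlap : ∀ v ∉ B, lap G r φ v = 0) : φ = 0 := by
  have hsum : ∑ v, φ v * lap G r φ v = 0 := by
    apply Finset.sum_eq_zero
    intro v _
    by_cases hv : v ∈ B
    · rw [hφB v hv, zero_mul]
    · rw [hlap v hv, mul_zero]
  have hip : ip r (fPot G r φ) (fPot G r φ) = 0 := by
    rw [pairing hrpos φ (fPot G r φ) (fPot_antisymm hrsym φ) (fPot_supp φ)]
    simp only [div_fPot, hsum, mul_zero]
  have hterm : ∀ i ∈ Finset.univ, ∀ j ∈ Finset.univ,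
      0 ≤ fPot G r φ i j * fPot G r φ i j * r i j := by
    intro i _ j _
    by_cases h : G.Adj i j
    · exact mul_nonneg (mul_self_nonneg _) (le_of_lt (hrpos i j h))
    · rw [fPot_supp φ i j h]; simp
  have hzz : ∀ i j, fPot G r φ i j * fPot G r φ i j * r i j = 0 := by
    have h1 : ∀ i ∈ Finset.univ, (0:ℝ) ≤ ∑ j, fPot G r φ i j * fPot G r φ i j * r i j :=
      fun i hi => Finset.sum_nonneg (hterm i hi)
    intro i j
    have h2 := (Finset.sum_eq_zero_iff_of_nonneg h1).mp hip i (Finset.mem_univ i)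
    exact (Finset.sum_eq_zero_iff_of_nonneg (hterm i (Finset.mem_univ i))).mp h2 j
      (Finset.mem_univ j)
  have hconst : ∀ i j, G.Adj i j → φ i = φ j := by
    intro i j hij
    have := hzz i j
    have hr : r i j ≠ 0 := ne_of_gt (hrpos i j hij)
    have hw : aW G r i j ≠ 0 := ne_of_gt (aW_pos hrpos hij)
    have : fPot G r φ i j = 0 := by
      rcases mul_eq_zero.mp this with h | h
      · rcases mul_eq_zero.mp h with h' | h' <;> [exact h'; exact h']
      · exact absurd h hr
    unfold fPot at this
    rcases mul_eq_zero.mp this with h | h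
    · linarith [sub_eq_zero.mp h]
    · exact absurd h hw
  funext v
  have := walk_const φ hconst ((hconn.preconnected v b₀).some)
  rw [Pi.zero_apply, this, hφB b₀ hb₀]

lemma solve_poisson (hconn : G.Connected) (hrsym : ∀ i j, r i j = r j i)
    (hrpos : ∀ i j, G.Adj i j → 0 < r i j)
    (B : Finset V) (b₀ : V) (hb₀ : b₀ ∈ B) (c : V → ℝ) (hc : ∀ v ∈ B, c v = 0) :
    ∃ φ : V → ℝ, (∀ v ∈ B, φ v = 0) ∧ ∀ v ∉ B, lap G r φ v = c v := by
  classical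
  let W : Submodule ℝ (V → ℝ) :=
    { carrier := {φ | ∀ v ∈ B, φ v = 0}
      add_mem' := fun ha hb v hv => by simp [ha v hv, hb v hv]
      zero_mem' := fun v _ => rfl
      smul_mem' := fun a φ hφ v hv => by simp [hφ v hv]
      }
  let T : W →ₗ[ℝ] W :=
    { toFun := fun φ => ⟨fun v => if v ∈ B then 0 else lap G r φ.1 v,
        fun v hv => if_pos hv⟩
      map_add' := by
        intro φ ψ
        apply Subtype.ext
        funext v
        by_cases hv : v ∈ B <;>
          simp [hv, lap_add]
      map_smul' := by
        intro a φ
        apply Subtype.ext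
        funext v
        by_cases hv : v ∈ B <;>
          simp [hv, lap_smul]
      }
  have hinj : Function.Injective T := by
    have hker : ∀ z : W, T z = 0 → z = 0 := by
      intro z hz
      apply Subtype.ext
      apply lap_zero_of_dirichlet hconn hrsym hrpos B b₀ hb₀ z.1 z.2
      intro v hv
      have := congrFun (congrArg Subtype.val hz) v
      simpa [T, hv] using this
    intro aφ bφ hab
    have : T (aφ - bφ) = 0 := by rw [map_sub, hab, sub_self]
    have := hker _ this
    exact sub_eq_zero.mp this
  have hsurj : Function.Surjective T := LinearMap.injective_iff_surjective.mp hinj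
  obtain ⟨φ, hφ⟩ := hsurj ⟨c, hc⟩
  refine ⟨φ.1, φ.2, fun v hv => ?_⟩
  have := congrFun (congrArg Subtype.val hφ) v
  simpa [T, hv] using this
end solver


section reffhelp
variable {G : SimpleGraph V} {r : V → V → ℝ}

lemma Reff_le_energy {A : Finset V} {t : V} (ht : t ∉ A) {g : V → V → ℝ}
    (hg : IsUnitFlow A t g) (hgs : ∀ i j, ¬ G.Adj i j → g i j = 0) :
    Reff G r A t ≤ ENNReal.ofReal (energy r g) := by
  unfold Reff
  rw [if_neg ht]
  exact iInf_le (fun f : {f : V → V → ℝ // IsUnitFlow A t f ∧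
    ∀ i j, ¬ G.Adj i j → f i j = 0} => ENNReal.ofReal (energy r f.1)) ⟨g, hg, hgs⟩

lemma le_Reff {A : Finset V} {t : V} (ht : t ∉ A) {e : ℝ≥0∞}
    (h : ∀ f : V → V → ℝ, IsUnitFlow A t f → (∀ i j, ¬ G.Adj i j → f i j = 0) →
      e ≤ ENNReal.ofReal (energy r f)) : e ≤ Reff G r A t := by
  unfold Reff
  rw [if_neg ht]
  exact le_iInf fun f => h f.1 f.2.1 f.2.2

lemma Reff_zero {A : Finset V} {t : V} (ht : t ∈ A) : Reff G r A t = 0 := by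
  unfold Reff; rw [if_pos ht]

lemma Reff_mono {A A' : Finset V} (hAA : A ⊆ A') (t : V) :
    Reff G r A' t ≤ Reff G r A t := by
  by_cases ht : t ∈ A'
  · rw [Reff_zero ht]; exact zero_le
  · have htA : t ∉ A := fun h => ht (hAA h)
    apply le_Reff htA
    intro f hf hfs
    exact Reff_le_energy ht ⟨hf.1, fun i hi => hf.2.1 i (fun hiA => hi (hAA hiA)), hf.2.2⟩ hfs
end reffhelp

section energy
variable {G : SimpleGraph V} {r : V → V → ℝ}

lemma energy_eq_ip (f : V → V → ℝ) : energy r f = (1 / 2) * ip r f f := by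
  unfold energy ip
  congr 1
  exact Finset.sum_congr rfl fun i _ => Finset.sum_congr rfl fun j _ => by ring

lemma energy_nonneg (hrpos : ∀ i j, G.Adj i j → 0 < r i j) (f : V → V → ℝ)
    (hs : ∀ i j, ¬ G.Adj i j → f i j = 0) : 0 ≤ energy r f := by
  unfold energy
  apply mul_nonneg (by norm_num)
  apply Finset.sum_nonneg; intro i _
  apply Finset.sum_nonneg; intro j _
  by_cases h : G.Adj i j
  · exact mul_nonneg (sq_nonneg _) (le_of_lt (hrpos i j h))
  · rw [hs i j h]; simp

lemma energy_add (a b : V → V → ℝ) :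
    energy r (fun i j => a i j + b i j) = energy r a + energy r b + ip r a b := by
  unfold energy ip
  have : ∀ i j : V, (a i j + b i j) ^ 2 * r i j
      = (a i j) ^ 2 * r i j + (b i j) ^ 2 * r i j + 2 * (a i j * b i j * r i j) := by
    intro i j; ring
  have hZ : ∑ i : V, ∑ j : V, 2 * (a i j * b i j * r i j)
      = 2 * ∑ i : V, ∑ j : V, a i j * b i j * r i j := by
    rw [Finset.mul_sum]
    exact Finset.sum_congr rfl fun i _ => (Finset.mul_sum _ _ _).symm
  simp only [this, Finset.sum_add_distrib, hZ]
  ring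
end energy

section optflow
variable {G : SimpleGraph V} {r : V → V → ℝ}

set_option maxHeartbeats 1000000 in
lemma exists_opt_flow (hconn : G.Connected) (hrsym : ∀ i j, r i j = r j i)
    (hrpos : ∀ i j, G.Adj i j → 0 < r i j)
    (A : Finset V) (a₀ : V) (ha₀ : a₀ ∈ A) (t : V) (ht : t ∉ A) :
    ∃ φ : V → ℝ, (∀ v ∈ A, φ v = 0) ∧ (∀ v, φ v ≤ 0) ∧
      (∀ v, v ∉ A → v ≠ t → lap G r φ v = 0) ∧ lap G r φ t = -1 ∧
      (IsUnitFlow A t (fPot G r φ) ∧ ∀ i j, ¬ G.Adj i j → fPot G r φ i j = 0) ∧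
      Reff G r A t = ENNReal.ofReal (energy r (fPot G r φ)) := by
  classical
  set c : V → ℝ := fun v => if v = t then (-1 : ℝ) else 0 with hcdef
  have hc : ∀ v ∈ A, c v = 0 := by
    intro v hv
    have : v ≠ t := fun h => ht (h ▸ hv)
    simp [hcdef, this]
  obtain ⟨φ, hφA, hlap⟩ := solve_poisson hconn hrsym hrpos A a₀ ha₀ c hc
  have hlap0 : ∀ v, v ∉ A → v ≠ t → lap G r φ v = 0 := by
    intro v hv hvt
    rw [hlap v hv]; simp [hcdef, hvt]
  have hlapt : lap G r φ t = -1 := by rw [hlap t ht]; simp [hcdef]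
  have hneg : ∀ v, φ v ≤ 0 := by
    apply max_principle hconn hrpos A a₀ ha₀ φ (fun v hv => le_of_eq (hφA v hv))
    intro v hv
    rw [hlap v hv]
    by_cases h : v = t <;> simp [hcdef, h]
  have hdivt : ∑ j, fPot G r φ j t = 1 := by
    have : ∀ j : V, fPot G r φ j t = - fPot G r φ t j :=
      fun j => fPot_antisymm hrsym φ j t
    rw [Finset.sum_congr rfl fun j _ => this j, Finset.sum_neg_distrib, div_fPot, hlapt]
    norm_num
  have hflow : IsUnitFlow A t (fPot G r φ) :=
    ⟨fPot_antisymm hrsym φ, fun i hi hit => by rw [div_fPot]; exact hlap0 i hi hit, hdivt⟩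
  refine ⟨φ, hφA, hneg, hlap0, hlapt, ⟨hflow, fPot_supp φ⟩, ?_⟩
  apply le_antisymm
  · exact Reff_le_energy ht hflow (fPot_supp φ)
  · apply le_Reff ht
    intro f hf hfs
    apply ENNReal.ofReal_le_ofReal
    -- optimality
    set b : V → V → ℝ := fun i j => f i j - fPot G r φ i j with hbdef
    have hba : ∀ i j, b i j = - b j i := by
      intro i j; simp only [hbdef]
      rw [hf.1 i j, fPot_antisymm hrsym φ i j]; ring
    have hbs : ∀ i j, ¬ G.Adj i j → b i j = 0 := by
      intro i j h; simp only [hbdef]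
      rw [hfs i j h, fPot_supp φ i j h, sub_zero]
    have hfeq : energy r f = energy r (fPot G r φ) + energy r b + ip r (fPot G r φ) b := by
      rw [← energy_add]
      congr 1
      funext i j
      simp [hbdef]
    have hipz : ip r (fPot G r φ) b = 0 := by
      rw [pairing hrpos φ b hba hbs]
      rw [Finset.sum_eq_zero, mul_zero]
      intro v _
      by_cases hv : v ∈ A
      · rw [hφA v hv, zero_mul]
      · have hdivb : ∑ j, b v j = 0 := by
          simp only [hbdef, Finset.sum_sub_distrib, div_fPot]
          by_cases hvt : v = t
          · rw [hvt]
            have h1 : ∑ j, f t j = -1 := by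
              have h2 : ∀ j : V, f t j = - f j t := fun j => hf.1 t j
              rw [Finset.sum_congr rfl fun j _ => h2 j, Finset.sum_neg_distrib, hf.2.2]
            rw [h1, hlapt]; ring
          · rw [hf.2.1 v hv hvt, hlap0 v hv hvt]; ring
        rw [hdivb, mul_zero]
    rw [hfeq, hipz, add_zero]
    linarith [energy_nonneg hrpos b hbs]
end optflow

section empties
variable {G : SimpleGraph V} {r : V → V → ℝ}

lemma Reff_empty_top (t : V) : Reff G r (∅ : Finset V) t = ⊤ := by
  unfold Reff
  rw [if_neg (Finset.notMem_empty t)]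
  have hempty : IsEmpty {f : V → V → ℝ // IsUnitFlow (∅ : Finset V) t f ∧
      ∀ i j, ¬ G.Adj i j → f i j = 0} := by
    constructor
    rintro ⟨f, hf, -⟩
    have h0 : ∑ i, ∑ j, f i j = - ∑ i, ∑ j, f i j := by
      conv_lhs => rw [Finset.sum_comm]
      rw [← Finset.sum_neg_distrib]
      refine Finset.sum_congr rfl fun j _ => ?_
      rw [← Finset.sum_neg_distrib]
      exact Finset.sum_congr rfl fun i _ => hf.1 i j
    have h0' : ∑ i, ∑ j, f i j = 0 := by linarith
    have h1 : ∑ i, ∑ j, f i j = -1 := by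
      rw [Finset.sum_eq_single t]
      · have : ∀ j : V, f t j = - f j t := fun j => hf.1 t j
        rw [Finset.sum_congr rfl fun j _ => this j, Finset.sum_neg_distrib, hf.2.2]
      · intro i _ hit
        exact hf.2.1 i (Finset.notMem_empty i) hit
      · intro h; exact absurd (Finset.mem_univ t) h
    rw [h0'] at h1
    norm_num at h1
  rw [iInf_of_empty]
end empties

section mainthm
variable {G : SimpleGraph V} {r : V → V → ℝ}

lemma energy_pair_identity (f1 f2 β : V → V → ℝ) :
    energy r (fun i j => f1 i j - β i j) + energy r (fun i j => f2 i j + β i j)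
      = energy r f1 + energy r f2 + ip r β (fun i j => β i j + f2 i j - f1 i j) := by
  unfold energy ip
  have key : ∀ i j : V, (f1 i j - β i j) ^ 2 * r i j + (f2 i j + β i j) ^ 2 * r i j
      = (f1 i j) ^ 2 * r i j + (f2 i j) ^ 2 * r i j
        + 2 * (β i j * (β i j + f2 i j - f1 i j) * r i j) := fun i j => by ring
  have h1 : ∑ i : V, ∑ j : V, (f1 i j - β i j) ^ 2 * r i j
      + ∑ i : V, ∑ j : V, (f2 i j + β i j) ^ 2 * r i j
      = ∑ i : V, ∑ j : V, ((f1 i j) ^ 2 * r i j + (f2 i j) ^ 2 * r i j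
        + 2 * (β i j * (β i j + f2 i j - f1 i j) * r i j)) := by
    rw [← Finset.sum_add_distrib]
    refine Finset.sum_congr rfl fun i _ => ?_
    rw [← Finset.sum_add_distrib]
    exact Finset.sum_congr rfl fun j _ => key i j
  have h2 : ∑ i : V, ∑ j : V, 2 * (β i j * (β i j + f2 i j - f1 i j) * r i j)
      = 2 * ∑ i : V, ∑ j : V, β i j * (β i j + f2 i j - f1 i j) * r i j := by
    rw [Finset.mul_sum]
    exact Finset.sum_congr rfl fun i _ => (Finset.mul_sum _ _ _).symm
  simp only [Finset.sum_add_distrib] at h1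
  rw [h2] at h1
  linarith
end mainthm


/-- Supermodularity of the effective resistance in the observed set:
`R_eff(t, S) + R_eff(t, S∪{x,y}) ≥ R_eff(t, S∪{x}) + R_eff(t, S∪{y})`. -/
theorem stmt4 (G : SimpleGraph V) (hconn : G.Connected)
    (r : V → V → ℝ) (hrsym : ∀ i j, r i j = r j i) (hrpos : ∀ i j, G.Adj i j → 0 < r i j)
    (S : Finset V) (x y : V) (hxy : x ≠ y) (hx : x ∉ S) (hy : y ∉ S) (t : V) :
    Reff G r (S ∪ {x}) t + Reff G r (S ∪ {y}) t
      ≤ Reff G r S t + Reff G r (S ∪ {x, y}) t := by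
  classical
  by_cases htS : t ∈ S
  · rw [Reff_zero (Finset.mem_union_left _ htS), Reff_zero (Finset.mem_union_left _ htS),
      Reff_zero htS, Reff_zero (Finset.mem_union_left _ htS)]
  by_cases htx : t = x
  · subst htx
    have e1 : Reff G r (S ∪ {t}) t = 0 := Reff_zero (by simp)
    have e2 : Reff G r (S ∪ {t, y}) t = 0 := Reff_zero (by simp)
    rw [e1, e2, zero_add, add_zero]
    exact Reff_mono Finset.subset_union_left t
  by_cases hty : t = y
  · subst hty
    have e1 : Reff G r (S ∪ {t}) t = 0 := Reff_zero (by simp)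
    have e2 : Reff G r (S ∪ {x, t}) t = 0 := Reff_zero (by simp)
    rw [e1, e2, add_zero, add_zero]
    exact Reff_mono Finset.subset_union_left t
  rcases Finset.eq_empty_or_nonempty S with hSe | ⟨s₀, hs₀⟩
  · subst hSe
    rw [Reff_empty_top t, top_add]
    exact le_top
  -- main case
  have htSxy : t ∉ S ∪ {x, y} := by simp [htS, htx, hty]
  have htSx : t ∉ S ∪ {x} := by simp [htS, htx]
  have htSy : t ∉ S ∪ {y} := by simp [htS, hty]
  have hxmem : x ∈ S ∪ {x, y} := by simp
  have hymem : y ∈ S ∪ {x, y} := by simp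
  obtain ⟨φ1, hφ1A, -, hlap1, hlapt1, ⟨hflow1, hsupp1⟩, hReff1⟩ :=
    exists_opt_flow hconn hrsym hrpos S s₀ hs₀ t htS
  obtain ⟨φ2, hφ2A, hφ2neg, hlap2, hlapt2, ⟨hflow2, hsupp2⟩, hReff2⟩ :=
    exists_opt_flow hconn hrsym hrpos (S ∪ {x, y}) s₀ (Finset.mem_union_left _ hs₀) t htSxy
  set f1 := fPot G r φ1 with hf1def
  set f2 := fPot G r φ2 with hf2def
  set dx := lap G r φ2 x with hdxdef
  set dy := lap G r φ2 y with hdydef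
  have hdx : 0 ≤ dx := by
    rw [hdxdef]
    refine Finset.sum_nonneg fun j _ => mul_nonneg ?_ (aW_nonneg hrpos x j)
    rw [hφ2A x hxmem]
    linarith [hφ2neg j]
  have hdy : 0 ≤ dy := by
    rw [hdydef]
    refine Finset.sum_nonneg fun j _ => mul_nonneg ?_ (aW_nonneg hrpos y j)
    rw [hφ2A y hymem]
    linarith [hφ2neg j]
  -- solve for ψ
  set c : V → ℝ := fun v => if v = x then -dx else 0 with hcdef
  have hcS : ∀ v ∈ S, c v = 0 := by
    intro v hv
    have : v ≠ x := fun h => hx (h ▸ hv)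
    simp [hcdef, this]
  obtain ⟨ψ, hψS, hlapψ⟩ := solve_poisson hconn hrsym hrpos S s₀ hs₀ c hcS
  have hlapψx : lap G r ψ x = -dx := by rw [hlapψ x hx]; simp [hcdef]
  have hlapψ0 : ∀ v, v ∉ S → v ≠ x → lap G r ψ v = 0 := by
    intro v hv hvx
    rw [hlapψ v hv]; simp [hcdef, hvx]
  have hψneg : ∀ v, ψ v ≤ 0 := by
    apply max_principle hconn hrpos S s₀ hs₀ ψ (fun v hv => le_of_eq (hψS v hv))
    intro v hv
    rw [hlapψ v hv]
    by_cases hvx : v = x <;> simp [hcdef, hvx] <;> linarith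
  set β := fPot G r ψ with hβdef
  set g1 : V → V → ℝ := fun i j => f1 i j - β i j with hg1def
  set g2 : V → V → ℝ := fun i j => f2 i j + β i j with hg2def
  -- flows
  have hβa : ∀ i j, β i j = - β j i := fPot_antisymm hrsym ψ
  have hβs : ∀ i j, ¬ G.Adj i j → β i j = 0 := fPot_supp ψ
  have hβdivt : ∑ j, β j t = 0 := by
    have : ∀ j : V, β j t = - β t j := fun j => hβa j t
    rw [Finset.sum_congr rfl fun j _ => this j, Finset.sum_neg_distrib, div_fPot,
      hlapψ0 t htS htx]
    norm_num
  have hg1flow : IsUnitFlow (S ∪ {x}) t g1 := by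
    refine ⟨fun i j => by rw [hg1def]; simp only; rw [hflow1.1 i j, hβa i j]; ring, ?_, ?_⟩
    · intro i hi hit
      have hiS : i ∉ S := fun h => hi (Finset.mem_union_left _ h)
      have hix : i ≠ x := fun h => hi (by simp [h])
      simp only [hg1def, Finset.sum_sub_distrib]
      rw [hflow1.2.1 i hiS hit, div_fPot, hlapψ0 i hiS hix]
      ring
    · simp only [hg1def, Finset.sum_sub_distrib]
      rw [hflow1.2.2, hβdivt]
      norm_num
  have hg1supp : ∀ i j, ¬ G.Adj i j → g1 i j = 0 := by
    intro i j h
    simp only [hg1def]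
    rw [hsupp1 i j h, hβs i j h, sub_zero]
  have hg2flow : IsUnitFlow (S ∪ {y}) t g2 := by
    refine ⟨fun i j => by rw [hg2def]; simp only; rw [hflow2.1 i j, hβa i j]; ring, ?_, ?_⟩
    · intro i hi hit
      have hiS : i ∉ S := fun h => hi (Finset.mem_union_left _ h)
      have hiy : i ≠ y := fun h => hi (by simp [h])
      simp only [hg2def, Finset.sum_add_distrib]
      by_cases hix : i = x
      · subst hix
        rw [div_fPot, div_fPot, hlapψx]
        rw [← hdxdef]
        ring
      · have hixy : i ∉ S ∪ {x, y} := by simp [hiS, hix, hiy]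
        rw [hflow2.2.1 i hixy hit, div_fPot, hlapψ0 i hiS hix]
        ring
    · simp only [hg2def, Finset.sum_add_distrib]
      rw [hflow2.2.2, hβdivt]
      norm_num
  have hg2supp : ∀ i j, ¬ G.Adj i j → g2 i j = 0 := by
    intro i j h
    simp only [hg2def]
    rw [hsupp2 i j h, hβs i j h, add_zero]
  -- energy comparison
  set δ : V → V → ℝ := fun i j => β i j + f2 i j - f1 i j with hδdef
  have hδa : ∀ i j, δ i j = - δ j i := by
    intro i j
    simp only [hδdef]
    rw [hβa i j, hflow2.1 i j, hflow1.1 i j]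
    ring
  have hδs : ∀ i j, ¬ G.Adj i j → δ i j = 0 := by
    intro i j h
    simp only [hδdef]
    rw [hβs i j h, hsupp2 i j h, hsupp1 i j h]
    ring
  have hδdiv : ∀ v : V, ∑ j, δ v j = lap G r ψ v + lap G r φ2 v - lap G r φ1 v := by
    intro v
    simp only [hδdef, Finset.sum_add_distrib, Finset.sum_sub_distrib, hf1def, hf2def, hβdef,
      div_fPot]
  have hipδ : ip r β δ = 2 * (ψ y * dy) := by
    rw [hβdef, pairing hrpos ψ δ hδa hδs]
    congr 1
    rw [Finset.sum_eq_single y]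
    · rw [hδdiv y, hlapψ0 y hy hxy.symm, ← hdydef,
        hlap1 y hy (fun h => hty h.symm)]
      ring_nf
    · intro v _ hvy
      by_cases hvS : v ∈ S
      · rw [hψS v hvS, zero_mul]
      · rw [hδdiv v]
        by_cases hvx : v = x
        · subst hvx
          rw [hlapψx, ← hdxdef, hlap1 v hvS (fun h => htx h.symm)]
          ring_nf
        · by_cases hvt : v = t
          · subst hvt
            rw [hlapψ0 v hvS hvx, hlapt1, hlapt2]
            ring_nf
          · rw [hlapψ0 v hvS hvx, hlap1 v hvS hvt,
              hlap2 v (by simp [hvS, hvx, hvy]) hvt]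
            ring_nf
    · intro h; exact absurd (Finset.mem_univ y) h
  have hEineq : energy r g1 + energy r g2 ≤ energy r f1 + energy r f2 := by
    have := energy_pair_identity (r := r) f1 f2 β
    rw [← hg1def, ← hg2def, ← hδdef] at this
    rw [this, hipδ]
    nlinarith [hψneg y, hdy]
  calc Reff G r (S ∪ {x}) t + Reff G r (S ∪ {y}) t
      ≤ ENNReal.ofReal (energy r g1) + ENNReal.ofReal (energy r g2) :=
        add_le_add (Reff_le_energy htSx hg1flow hg1supp) (Reff_le_energy htSy hg2flow hg2supp)
    _ = ENNReal.ofReal (energy r g1 + energy r g2) :=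
        (ENNReal.ofReal_add (energy_nonneg hrpos g1 hg1supp) (energy_nonneg hrpos g2 hg2supp)).symm
    _ ≤ ENNReal.ofReal (energy r f1 + energy r f2) := ENNReal.ofReal_le_ofReal hEineq
    _ = ENNReal.ofReal (energy r f1) + ENNReal.ofReal (energy r f2) :=
        ENNReal.ofReal_add (energy_nonneg hrpos f1 hsupp1) (energy_nonneg hrpos f2 hsupp2)
    _ = Reff G r S t + Reff G r (S ∪ {x, y}) t := by rw [hReff1, hReff2]
end

section
/- Let Q, Q' be symmetric diagonally dominant n×n matrices with non-positive off-diagonal entries that are ε-close in the sense that e^{-ε}|Q[i,j]| ≤ |Q'[i,j]| ≤ e^{ε}|Q[i,j]| for all i≠j and e^{-ε}Σ_j Q[i,j] ≤ Σ_j Q'[i,j] ≤ e^{ε}Σ_j Q[i,j] for all i. If both have support V×V and integrating out a single variable k ∈ V yields matrices P = Marginal_{V,V\{k\}}(Q) and P' = Marginal_{V,V\{k\}}(Q'), where |P[i,j]| = |Q[i,j]| + |Q[i,k]||Q[j,k]|/Q[k,k] and row sums transform analogously, then P and P' are 3ε-close in the same sense. -/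
/-- The `ε`-closeness relation on symmetric diagonally dominant matrices with non-positive
off-diagonal entries: off-diagonal entries are multiplicatively `e^{±ε}`-close in absolute
value, and so are the row sums. -/
def GClose {n : ℕ} (ε : ℝ) (Q Q' : Matrix (Fin n) (Fin n) ℝ) : Prop :=
  (∀ i j, i ≠ j →
    Real.exp (-ε) * |Q i j| ≤ |Q' i j| ∧ |Q' i j| ≤ Real.exp ε * |Q i j|) ∧
  (∀ i, Real.exp (-ε) * (∑ j, Q i j) ≤ ∑ j, Q' i j ∧
    ∑ j, Q' i j ≤ Real.exp ε * (∑ j, Q i j))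

/-- One step of Gaussian elimination (Schur complement) eliminating the variable `k`:
`Marginal_{V, V\{k}}(Q)`, with the row and column `k` zeroed out. -/

lemma close3_aux {ε a a' b b' c c' d d' : ℝ} (hε : 0 ≤ ε)
    (ha : 0 ≤ a) (hb : 0 ≤ b) (hc : 0 ≤ c) (hd : 0 < d) (hd' : 0 < d')
    (ha1 : Real.exp (-ε) * a ≤ a') (ha2 : a' ≤ Real.exp ε * a)
    (hb1 : Real.exp (-ε) * b ≤ b') (hb2 : b' ≤ Real.exp ε * b)
    (hc1 : Real.exp (-ε) * c ≤ c') (hc2 : c' ≤ Real.exp ε * c)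
    (hd1 : Real.exp (-ε) * d ≤ d') (hd2 : d' ≤ Real.exp ε * d) :
    Real.exp (-(3*ε)) * (a + b*c/d) ≤ a' + b'*c'/d' ∧
      a' + b'*c'/d' ≤ Real.exp (3*ε) * (a + b*c/d) := by
  set E := Real.exp ε with hE
  have hE0 : 0 < E := Real.exp_pos ε
  have hE1 : 1 ≤ E := Real.one_le_exp hε
  have hneg : Real.exp (-ε) = E⁻¹ := Real.exp_neg ε
  have h3 : Real.exp (3*ε) = E^3 := by
    rw [show (3:ℝ)*ε = ε+ε+ε by ring, Real.exp_add, Real.exp_add]; ring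
  have h3n : Real.exp (-(3*ε)) = (E^3)⁻¹ := by rw [Real.exp_neg, h3]
  rw [hneg] at ha1 hb1 hc1 hd1
  rw [h3, h3n]
  have hb' : 0 ≤ b' := le_trans (by positivity) hb1
  have hc' : 0 ≤ c' := le_trans (by positivity) hc1
  have hE3 : E ≤ E^3 := le_self_pow₀ hE1 (by norm_num)
  constructor
  · -- lower bound
    have hA : (E^3)⁻¹ * a ≤ a' := by
      refine le_trans ?_ ha1
      have : (E^3)⁻¹ ≤ E⁻¹ := by
        apply inv_anti₀ hE0 hE3
      nlinarith [this]
    have hnum : E⁻¹*b * (E⁻¹*c) ≤ b' * c' :=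
      mul_le_mul hb1 hc1 (by positivity) hb'
    have hdiv : (E⁻¹*b * (E⁻¹*c)) / (E*d) ≤ b'*c'/d' :=
      div_le_div₀ (mul_nonneg hb' hc') hnum hd' hd2
    have heq : (E⁻¹*b * (E⁻¹*c)) / (E*d) = (E^3)⁻¹ * (b*c/d) := by
      field_simp
    rw [heq] at hdiv
    calc (E^3)⁻¹ * (a + b*c/d) = (E^3)⁻¹ * a + (E^3)⁻¹ * (b*c/d) := by ring
    _ ≤ a' + b'*c'/d' := add_le_add hA hdiv
  · have hA : a' ≤ E^3 * a := le_trans ha2 (by nlinarith)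
    have hnum : b' * c' ≤ E*b * (E*c) :=
      mul_le_mul hb2 hc2 hc' (by positivity)
    have hdiv : b'*c'/d' ≤ (E*b * (E*c)) / (E⁻¹*d) :=
      div_le_div₀ (by positivity) hnum (by positivity) hd1
    have heq : (E*b * (E*c)) / (E⁻¹*d) = E^3 * (b*c/d) := by
      field_simp
    rw [heq] at hdiv
    calc a' + b'*c'/d' ≤ E^3 * a + E^3 * (b*c/d) := add_le_add hA hdiv
    _ = E^3 * (a + b*c/d) := by ring
section Aux

lemma diag_eq {n : ℕ} (Q : Matrix (Fin n) (Fin n) ℝ)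
    (hQoff : ∀ i j, i ≠ j → Q i j ≤ 0) (k : Fin n) :
    Q k k = (∑ j, Q k j) + ∑ j ∈ Finset.univ.erase k, |Q k j| := by
  have h1 : Q k k + ∑ j ∈ Finset.univ.erase k, Q k j = ∑ j, Q k j :=
    Finset.add_sum_erase _ _ (Finset.mem_univ k)
  have h2 : ∑ j ∈ Finset.univ.erase k, |Q k j| = -∑ j ∈ Finset.univ.erase k, Q k j := by
    rw [← Finset.sum_neg_distrib]
    refine Finset.sum_congr rfl fun j hj => ?_
    exact abs_of_nonpos (hQoff k j (Ne.symm (Finset.ne_of_mem_erase hj)))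
  linarith

lemma elim_abs {n : ℕ} (Q : Matrix (Fin n) (Fin n) ℝ) (k : Fin n)
    (hQoff : ∀ i j, i ≠ j → Q i j ≤ 0) (hQkk : 0 < Q k k)
    (i j : Fin n) (hij : i ≠ j) (hik : i ≠ k) (hjk : j ≠ k) :
    |Matrix.of (fun i j => if i = k ∨ j = k then 0 else Q i j - Q i k * Q k j / Q k k) i j|
      = |Q i j| + |Q i k| * |Q k j| / Q k k := by
  simp only [Matrix.of_apply, if_neg (by tauto : ¬(i = k ∨ j = k))]
  have h1 : Q i j ≤ 0 := hQoff i j hij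
  have h2 : Q i k ≤ 0 := hQoff i k hik
  have h3 : Q k j ≤ 0 := hQoff k j fun h => hjk h.symm
  have h4 : 0 ≤ Q i k * Q k j / Q k k :=
    div_nonneg (by nlinarith) hQkk.le
  rw [abs_of_nonpos (by linarith), abs_of_nonpos h1, abs_of_nonpos h2, abs_of_nonpos h3]
  ring

lemma elim_rowsum {n : ℕ} (Q : Matrix (Fin n) (Fin n) ℝ) (k : Fin n)
    (hQoff : ∀ i j, i ≠ j → Q i j ≤ 0) (hQkk : 0 < Q k k)
    (i : Fin n) (hik : i ≠ k) :
    (∑ j, Matrix.of (fun i j => if i = k ∨ j = k then 0 else Q i j - Q i k * Q k j / Q k k) i j)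
      = (∑ j, Q i j) + |Q i k| * (∑ j, Q k j) / Q k k := by
  have hsplit : ∀ (f : Fin n → ℝ), f k + ∑ j ∈ Finset.univ.erase k, f j = ∑ j, f j :=
    fun f => Finset.add_sum_erase _ _ (Finset.mem_univ k)
  have h1 : (∑ j, Matrix.of (fun i j => if i = k ∨ j = k then 0 else Q i j - Q i k * Q k j / Q k k) i j)
      = ∑ j ∈ Finset.univ.erase k, (Q i j - Q i k * Q k j / Q k k) := by
    rw [← hsplit]
    simp only [Matrix.of_apply]
    rw [if_pos (Or.inr trivial), zero_add]
    refine Finset.sum_congr rfl fun j hj => ?_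
    rw [if_neg]
    push_neg
    exact ⟨hik, Finset.ne_of_mem_erase hj⟩
  have h2 : ∑ j ∈ Finset.univ.erase k, Q i j = (∑ j, Q i j) - Q i k := by
    have := hsplit (fun j => Q i j); linarith
  have h3 : ∑ j ∈ Finset.univ.erase k, Q k j = (∑ j, Q k j) - Q k k := by
    have := hsplit (fun j => Q k j); linarith
  rw [h1, Finset.sum_sub_distrib, h2, ← Finset.sum_div, ← Finset.mul_sum, h3,
    abs_of_nonpos (hQoff i k hik)]
  field_simp
  ring

end Aux
/-- One step of Gaussian elimination (Schur complement) eliminating the variable `k`: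
`Marginal_{V, V\{k}}(Q)`, with the row and column `k` zeroed out. -/
noncomputable def elim {n : ℕ} (Q : Matrix (Fin n) (Fin n) ℝ) (k : Fin n) :
    Matrix (Fin n) (Fin n) ℝ :=
  Matrix.of fun i j => if i = k ∨ j = k then 0 else Q i j - Q i k * Q k j / Q k k

/-- If `Q, Q'` are symmetric diagonally dominant matrices with non-positive off-diagonal
entries, supported on `V × V`, that are `ε`-close, then after integrating out a single
variable `k ∈ V` the resulting matrices `Marginal_{V,V\{k}}(Q)` and `Marginal_{V,V\{k}}(Q')`
are `3ε`-close. -/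
theorem stmt9 {n : ℕ} (ε : ℝ) (hε : 0 ≤ ε) (Q Q' : Matrix (Fin n) (Fin n) ℝ)
    (V : Finset (Fin n)) (k : Fin n) (hk : k ∈ V)
    (hQsym : Q.IsSymm) (hQ'sym : Q'.IsSymm)
    (hQoff : ∀ i j, i ≠ j → Q i j ≤ 0) (hQ'off : ∀ i j, i ≠ j → Q' i j ≤ 0)
    (hQdd : ∀ i, 0 ≤ ∑ j, Q i j) (hQ'dd : ∀ i, 0 ≤ ∑ j, Q' i j)
    (hQsupp : ∀ i j, i ∉ V ∨ j ∉ V → Q i j = 0)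
    (hQ'supp : ∀ i j, i ∉ V ∨ j ∉ V → Q' i j = 0)
    (hQkk : 0 < Q k k) (hQ'kk : 0 < Q' k k)
    (hclose : GClose ε Q Q') :
    GClose (3 * ε) (elim Q k) (elim Q' k) := by
  obtain ⟨hoffc, hrowc⟩ := hclose
  have hdiag : Real.exp (-ε) * Q k k ≤ Q' k k ∧ Q' k k ≤ Real.exp ε * Q k k := by
    rw [diag_eq Q hQoff k, diag_eq Q' hQ'off k]
    constructor
    · rw [mul_add]
      refine add_le_add (hrowc k).1 ?_
      rw [Finset.mul_sum]
      exact Finset.sum_le_sum fun j hj =>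
        (hoffc k j (Ne.symm (Finset.ne_of_mem_erase hj))).1
    · rw [mul_add]
      refine add_le_add (hrowc k).2 ?_
      rw [Finset.mul_sum]
      exact Finset.sum_le_sum fun j hj =>
        (hoffc k j (Ne.symm (Finset.ne_of_mem_erase hj))).2
  constructor
  · intro i j hij
    by_cases hik : i = k
    · simp [elim, hik]
    by_cases hjk : j = k
    · simp [elim, hjk]
    · have e1 := elim_abs Q k hQoff hQkk i j hij hik hjk
      have e2 := elim_abs Q' k hQ'off hQ'kk i j hij hik hjk
      simp only [elim]
      rw [e1, e2]
      exact close3_aux hε (abs_nonneg _) (abs_nonneg _) (abs_nonneg _) hQkk hQ'kk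
        (hoffc i j hij).1 (hoffc i j hij).2 (hoffc i k hik).1 (hoffc i k hik).2
        (hoffc k j fun h => hjk h.symm).1 (hoffc k j fun h => hjk h.symm).2
        hdiag.1 hdiag.2
  · intro i
    by_cases hik : i = k
    · simp [elim, hik]
    · have r1 := elim_rowsum Q k hQoff hQkk i hik
      have r2 := elim_rowsum Q' k hQ'off hQ'kk i hik
      simp only [elim]
      rw [r1, r2]
      exact close3_aux hε (hQdd i) (abs_nonneg _) (hQdd k) hQkk hQ'kk
        (hrowc i).1 (hrowc i).2 (hoffc i k hik).1 (hoffc i k hik).2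
        (hrowc k).1 (hrowc k).2 hdiag.1 hdiag.2
end

section
/- Let Q, Q' be symmetric diagonally dominant n×n matrices with non-positive off-diagonal entries, both with support V×V, such that e^{-ε}|Q[i,j]| ≤ |Q'[i,j]| ≤ e^{ε}|Q[i,j]| for all i≠j and e^{-ε}Σ_j Q[i,j] ≤ Σ_j Q'[i,j] ≤ e^{ε}Σ_j Q[i,j] for all i. If Q[V,V] is positive definite, then e^{-ε}·Tr(Q[V,V]^{-1}) ≤ Tr(Q'[V,V]^{-1}) ≤ e^{ε}·Tr(Q[V,V]^{-1}). -/
open Matrix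

lemma quadform_id {n : ℕ} (M : Matrix (Fin n) (Fin n) ℝ) (hsym : M.IsSymm) (x : Fin n → ℝ) :
    x ⬝ᵥ M.mulVec x =
      (∑ i, (∑ j, M i j) * (x i)^2) - ∑ i, ∑ j, M i j * (x i - x j)^2 / 2 := by
  have hswap : ∑ i, ∑ j, M i j * (x j)^2 / 2 = ∑ i, ∑ j, M i j * (x i)^2 / 2 := by
    rw [Finset.sum_comm]
    refine Finset.sum_congr rfl fun i _ => Finset.sum_congr rfl fun j _ => ?_
    rw [hsym.apply i j]
  have hL : x ⬝ᵥ M.mulVec x = ∑ i, ∑ j, x i * (M i j * x j) := by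
    simp [dotProduct, mulVec, Finset.mul_sum]
  rw [hL, eq_sub_iff_add_eq]
  have key : (∑ i, ∑ j, x i * (M i j * x j)) + (∑ i, ∑ j, M i j * (x i - x j)^2 / 2)
      = (∑ i, ∑ j, M i j * (x i)^2 / 2) + (∑ i, ∑ j, M i j * (x j)^2 / 2) := by
    rw [← Finset.sum_add_distrib, ← Finset.sum_add_distrib]
    refine Finset.sum_congr rfl fun i _ => ?_
    rw [← Finset.sum_add_distrib, ← Finset.sum_add_distrib]
    exact Finset.sum_congr rfl fun j _ => by ring
  rw [key, hswap, ← Finset.sum_add_distrib]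
  refine Finset.sum_congr rfl fun i _ => ?_
  rw [← Finset.sum_add_distrib, Finset.sum_mul]
  exact Finset.sum_congr rfl fun j _ => by ring

/-- monotonicity of quadratic forms -/
lemma quad_mono {n : ℕ} (c : ℝ) (Q Q' : Matrix (Fin n) (Fin n) ℝ)
    (hQsym : Q.IsSymm) (hQ'sym : Q'.IsSymm)
    (hoff : ∀ i j, i ≠ j → Q' i j ≤ c * Q i j)
    (hsum : ∀ i, c * (∑ j, Q i j) ≤ ∑ j, Q' i j) (x : Fin n → ℝ) :
    c * (x ⬝ᵥ Q.mulVec x) ≤ x ⬝ᵥ Q'.mulVec x := by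
  rw [quadform_id Q hQsym x, quadform_id Q' hQ'sym x, mul_sub, Finset.mul_sum, Finset.mul_sum]
  refine sub_le_sub ?_ ?_
  · refine Finset.sum_le_sum fun i _ => ?_
    rw [← mul_assoc]
    exact mul_le_mul_of_nonneg_right (hsum i) (sq_nonneg _)
  · refine Finset.sum_le_sum fun i _ => ?_
    rw [Finset.mul_sum]
    refine Finset.sum_le_sum fun j _ => ?_
    rcases eq_or_ne i j with rfl | hij
    · simp
    · have h1 : Q' i j * ((x i - x j)^2/2) ≤ c * Q i j * ((x i - x j)^2/2) :=
        mul_le_mul_of_nonneg_right (hoff i j hij) (by positivity)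
      calc Q' i j * (x i - x j)^2/2 = Q' i j * ((x i - x j)^2/2) := by ring
        _ ≤ c * Q i j * ((x i - x j)^2/2) := h1
        _ = c * (Q i j * (x i - x j)^2/2) := by ring

/-- restriction of quadratic form to `V` via zero extension -/
lemma quad_restrict {n : ℕ} (M : Matrix (Fin n) (Fin n) ℝ) (V : Finset (Fin n))
    (y : {i : Fin n // i ∈ V} → ℝ) :
    y ⬝ᵥ (M.submatrix (fun a : {i : Fin n // i ∈ V} => (a : Fin n))
        (fun a : {i : Fin n // i ∈ V} => (a : Fin n))).mulVec y
      = (fun i => if h : i ∈ V then y ⟨i, h⟩ else 0) ⬝ᵥ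
        M.mulVec (fun i => if h : i ∈ V then y ⟨i, h⟩ else 0) := by
  set x : Fin n → ℝ := fun i => if h : i ∈ V then y ⟨i, h⟩ else 0 with hx
  have hx0 : ∀ i, i ∉ V → x i = 0 := fun i hi => dif_neg hi
  have hxy : ∀ a : {i : Fin n // i ∈ V}, x (a : Fin n) = y a := fun a => by
    rw [hx]; dsimp only; rw [dif_pos a.2, Subtype.coe_eta]
  have inner : ∀ a : {i : Fin n // i ∈ V},
      (∑ b : {i : Fin n // i ∈ V}, M a b * y b) = ∑ j, M a j * x j := by
    intro a
    calc (∑ b : {i : Fin n // i ∈ V}, M (a:Fin n) b * y b)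
        = ∑ b : {i : Fin n // i ∈ V}, M (a:Fin n) b * x b :=
          Finset.sum_congr rfl fun b _ => by rw [hxy]
      _ = ∑ j ∈ V, M (a:Fin n) j * x j := by
          rw [Finset.univ_eq_attach]
          exact Finset.sum_attach V (fun j => M (a:Fin n) j * x j)
      _ = ∑ j, M (a:Fin n) j * x j :=
          Finset.sum_subset V.subset_univ (fun j _ hj => by rw [hx0 j hj, mul_zero])
  simp only [dotProduct, mulVec, submatrix_apply]
  calc (∑ a : {i : Fin n // i ∈ V}, y a * ∑ b : {i : Fin n // i ∈ V}, M (a:Fin n) b * y b)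
      = ∑ a : {i : Fin n // i ∈ V}, x (a:Fin n) * ∑ j, M (a:Fin n) j * x j :=
        Finset.sum_congr rfl fun a _ => by rw [hxy, inner]
    _ = ∑ i ∈ V, x i * ∑ j, M i j * x j := by
        rw [Finset.univ_eq_attach]
        exact Finset.sum_attach V (fun i => x i * ∑ j, M i j * x j)
    _ = ∑ i, x i * ∑ j, M i j * x j :=
        Finset.sum_subset V.subset_univ (fun i _ hi => by rw [hx0 i hi, zero_mul])

/-- key inverse-trace monotonicity -/
lemma inv_trace_mono {m : Type*} [Fintype m] [DecidableEq m] (A B : Matrix m m ℝ)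
    (hA : A.PosDef) (hB : B.PosDef)
    (h : ∀ x, x ⬝ᵥ A.mulVec x ≤ x ⬝ᵥ B.mulVec x) :
    B⁻¹.trace ≤ A⁻¹.trace := by
  have hAd : IsUnit A.det := hA.det_pos.ne'.isUnit
  have hBd : IsUnit B.det := hB.det_pos.ne'.isUnit
  have hvec : ∀ v : m → ℝ, v ⬝ᵥ B⁻¹.mulVec v ≤ v ⬝ᵥ A⁻¹.mulVec v := by
    intro v
    set x := B⁻¹.mulVec v with hxdef
    set w := A⁻¹.mulVec v with hwdef
    have hBx : B.mulVec x = v := by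
      rw [hxdef, mulVec_mulVec, Matrix.mul_nonsing_inv B hBd, one_mulVec]
    have hAw : A.mulVec w = v := by
      rw [hwdef, mulVec_mulVec, Matrix.mul_nonsing_inv A hAd, one_mulVec]
    have hsymA : Aᵀ = A := hA.isHermitian
    have hdot : ∀ u : m → ℝ, u ⬝ᵥ A.mulVec w = u ⬝ᵥ v := fun u => by rw [hAw]
    have hdot2 : w ⬝ᵥ A.mulVec x = v ⬝ᵥ x := by
      rw [dotProduct_mulVec, ← mulVec_transpose, hsymA, hAw]
    have key : 0 ≤ (x - w) ⬝ᵥ A.mulVec (x - w) := by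
      have := hA.posSemidef.dotProduct_mulVec_nonneg (x - w)
      simpa using this
    have expand : (x - w) ⬝ᵥ A.mulVec (x - w)
        = x ⬝ᵥ A.mulVec x - x ⬝ᵥ v - v ⬝ᵥ x + w ⬝ᵥ v := by
      rw [Matrix.mulVec_sub, dotProduct_sub, sub_dotProduct, sub_dotProduct,
        hdot x, hdot w, hdot2]
      ring
    have step : 2 * (v ⬝ᵥ x) - x ⬝ᵥ A.mulVec x ≤ w ⬝ᵥ v := by
      have hcomm : x ⬝ᵥ v = v ⬝ᵥ x := dotProduct_comm x v
      nlinarith [key, expand]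
    have hBform : x ⬝ᵥ B.mulVec x = v ⬝ᵥ x := by
      rw [hBx, dotProduct_comm]
    have hwv : w ⬝ᵥ v = v ⬝ᵥ A⁻¹.mulVec v := by rw [hwdef, dotProduct_comm]
    have hvx : v ⬝ᵥ B⁻¹.mulVec v = v ⬝ᵥ x := rfl
    have := h x
    calc v ⬝ᵥ B⁻¹.mulVec v = 2 * (v ⬝ᵥ x) - x ⬝ᵥ B.mulVec x := by
          rw [hvx, hBform]; ring
      _ ≤ 2 * (v ⬝ᵥ x) - x ⬝ᵥ A.mulVec x := by linarith
      _ ≤ w ⬝ᵥ v := step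
      _ = v ⬝ᵥ A⁻¹.mulVec v := hwv
  have diag : ∀ (M : Matrix m m ℝ) (i : m),
      M i i = (Pi.single i 1) ⬝ᵥ M.mulVec (Pi.single i (1:ℝ)) := by
    intro M i
    rw [mulVec_single, single_dotProduct]
    simp
  rw [Matrix.trace, Matrix.trace]
  refine Finset.sum_le_sum fun i _ => ?_
  rw [Matrix.diag_apply, Matrix.diag_apply, diag B⁻¹ i, diag A⁻¹ i]
  exact hvec _

lemma posdef_smul_real {m : Type*} [Fintype m] (c : ℝ) (hc : 0 < c)
    (A : Matrix m m ℝ) (hA : A.PosDef) : (c • A).PosDef := by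
  constructor
  · rw [Matrix.IsHermitian, conjTranspose_eq_transpose_of_trivial, transpose_smul,
      ← conjTranspose_eq_transpose_of_trivial, hA.isHermitian.eq]
  · intro x hx
    have := hA.dotProduct_mulVec_pos (x := ⇑x) (by simpa using hx)
    have h2 := mul_pos hc this
    simpa [smul_mulVec, dotProduct_smul, dotProduct, mulVec, Finsupp.sum_fintype, Finset.mul_sum,
      mul_assoc, mul_left_comm] using h2


/-- If `Q, Q'` are symmetric diagonally dominant matrices with non-positive off-diagonal
entries, supported on `V × V` and `ε`-close, and `Q[V,V]` is positive definite, then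
`e^{-ε}·Tr(Q[V,V]⁻¹) ≤ Tr(Q'[V,V]⁻¹) ≤ e^{ε}·Tr(Q[V,V]⁻¹)`. -/
theorem stmt10 {n : ℕ} (ε : ℝ) (hε : 0 ≤ ε) (Q Q' : Matrix (Fin n) (Fin n) ℝ)
    (V : Finset (Fin n))
    (hQsym : Q.IsSymm) (hQ'sym : Q'.IsSymm)
    (hQoff : ∀ i j, i ≠ j → Q i j ≤ 0) (hQ'off : ∀ i j, i ≠ j → Q' i j ≤ 0)
    (hQdd : ∀ i, 0 ≤ ∑ j, Q i j) (hQ'dd : ∀ i, 0 ≤ ∑ j, Q' i j)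
    (hQsupp : ∀ i j, i ∉ V ∨ j ∉ V → Q i j = 0)
    (hQ'supp : ∀ i j, i ∉ V ∨ j ∉ V → Q' i j = 0)
    (hpd : (Q.submatrix (fun a : {i : Fin n // i ∈ V} => (a : Fin n))
      (fun a : {i : Fin n // i ∈ V} => (a : Fin n))).PosDef)
    (hclose : GClose ε Q Q') :
    Real.exp (-ε) * Matrix.trace
        ((Q.submatrix (fun a : {i : Fin n // i ∈ V} => (a : Fin n))
          (fun a : {i : Fin n // i ∈ V} => (a : Fin n)))⁻¹)
      ≤ Matrix.trace
        ((Q'.submatrix (fun a : {i : Fin n // i ∈ V} => (a : Fin n))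
          (fun a : {i : Fin n // i ∈ V} => (a : Fin n)))⁻¹)
    ∧ Matrix.trace
        ((Q'.submatrix (fun a : {i : Fin n // i ∈ V} => (a : Fin n))
          (fun a : {i : Fin n // i ∈ V} => (a : Fin n)))⁻¹)
      ≤ Real.exp ε * Matrix.trace
        ((Q.submatrix (fun a : {i : Fin n // i ∈ V} => (a : Fin n))
          (fun a : {i : Fin n // i ∈ V} => (a : Fin n)))⁻¹) := by
  set c := Real.exp (-ε) with hcdef
  have hc : 0 < c := Real.exp_pos _
  have hce : c * Real.exp ε = 1 := by
    rw [hcdef, ← Real.exp_add]; simp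
  set e : {i : Fin n // i ∈ V} → Fin n := fun a => (a : Fin n) with he
  set A := Q.submatrix e e with hA
  set A' := Q'.submatrix e e with hA'
  -- entrywise comparisons
  have hoff1 : ∀ i j, i ≠ j → Q' i j ≤ c * Q i j := by
    intro i j hij
    have h1 := (hclose.1 i j hij).1
    rw [abs_of_nonpos (hQoff i j hij), abs_of_nonpos (hQ'off i j hij)] at h1
    linarith
  have hoff2 : ∀ i j, i ≠ j → Q i j ≤ c * Q' i j := by
    intro i j hij
    have h2 := (hclose.1 i j hij).2
    rw [abs_of_nonpos (hQoff i j hij), abs_of_nonpos (hQ'off i j hij)] at h2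
    have h3 : c * -Q' i j ≤ c * (Real.exp ε * -Q i j) :=
      mul_le_mul_of_nonneg_left h2 hc.le
    have h4 : c * (Real.exp ε * -Q i j) = -Q i j := by
      rw [← mul_assoc, hce, one_mul]
    linarith
  have hsum1 : ∀ i, c * (∑ j, Q i j) ≤ ∑ j, Q' i j := fun i => (hclose.2 i).1
  have hsum2 : ∀ i, c * (∑ j, Q' i j) ≤ ∑ j, Q i j := by
    intro i
    have h2 := (hclose.2 i).2
    have h3 : c * (∑ j, Q' i j) ≤ c * (Real.exp ε * ∑ j, Q i j) :=
      mul_le_mul_of_nonneg_left h2 hc.le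
    have h4 : c * (Real.exp ε * ∑ j, Q i j) = ∑ j, Q i j := by
      rw [← mul_assoc, hce, one_mul]
    linarith
  -- quadratic form comparisons on the submatrices
  have hq1 : ∀ y, c * (y ⬝ᵥ A.mulVec y) ≤ y ⬝ᵥ A'.mulVec y := by
    intro y
    rw [hA, hA', he, quad_restrict Q V y, quad_restrict Q' V y]
    exact quad_mono c Q Q' hQsym hQ'sym hoff1 hsum1 _
  have hq2 : ∀ y, c * (y ⬝ᵥ A'.mulVec y) ≤ y ⬝ᵥ A.mulVec y := by
    intro y
    rw [hA, hA', he, quad_restrict Q V y, quad_restrict Q' V y]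
    exact quad_mono c Q' Q hQ'sym hQsym hoff2 hsum2 _
  -- A' is positive definite
  have hpd' : A'.PosDef := by
    constructor
    · rw [Matrix.IsHermitian, conjTranspose_eq_transpose_of_trivial]
      exact hQ'sym.submatrix e
    · intro y hy
      have h0 : 0 < y ⬝ᵥ A.mulVec y := by simpa using hpd.dotProduct_mulVec_pos (x := ⇑y) (by simpa using hy)
      have := hq1 y
      have : 0 < y ⬝ᵥ A'.mulVec y := lt_of_lt_of_le (mul_pos hc h0) this
      simpa [dotProduct, mulVec, Finsupp.sum_fintype, Finset.mul_sum, mul_assoc] using this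
  have hApd : A.PosDef := hpd
  -- scaled matrices
  have hcApd : (c • A).PosDef := posdef_smul_real c hc A hApd
  have heApd : (Real.exp ε • A).PosDef := posdef_smul_real _ (Real.exp_pos _) A hApd
  have hAdet : IsUnit A.det := hApd.det_pos.ne'.isUnit
  -- inverse of scaled matrices
  have hAinv : A * A⁻¹ = 1 := Matrix.mul_nonsing_inv A hAdet
  have hinv1 : (c • A)⁻¹ = Real.exp ε • A⁻¹ := by
    apply Matrix.inv_eq_right_inv
    rw [Matrix.smul_mul, Matrix.mul_smul, hAinv, smul_smul, hce, one_smul]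
  have hinv2 : (Real.exp ε • A)⁻¹ = c • A⁻¹ := by
    apply Matrix.inv_eq_right_inv
    rw [Matrix.smul_mul, Matrix.mul_smul, hAinv, smul_smul, mul_comm, hce, one_smul]
  constructor
  · -- lower bound
    have hmono := inv_trace_mono A' (Real.exp ε • A) hpd'
      heApd (fun x => by
        have h5 : Real.exp ε * (c * (x ⬝ᵥ A'.mulVec x)) ≤ Real.exp ε * (x ⬝ᵥ A.mulVec x) :=
          mul_le_mul_of_nonneg_left (hq2 x) (Real.exp_pos ε).le
        have h6 : Real.exp ε * (c * (x ⬝ᵥ A'.mulVec x)) = x ⬝ᵥ A'.mulVec x := by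
          rw [← mul_assoc, mul_comm (Real.exp ε) c, hce, one_mul]
        rw [smul_mulVec, dotProduct_smul, smul_eq_mul]
        linarith)
    rw [hinv2, trace_smul, smul_eq_mul] at hmono
    exact hmono
  · -- upper bound
    have hmono := inv_trace_mono (c • A) A' hcApd hpd' (fun x => by
      rw [smul_mulVec, dotProduct_smul, smul_eq_mul]
      exact hq1 x)
    rw [hinv1, trace_smul, smul_eq_mul] at hmono
    exact hmono
end

section
/- For any k and 0 < ε ≤ 1/(k(4√2+4)), there exists a finite set R of k×k orthogonal matrices with |R| ≤ (2k·e^{εk/2}·(2/ε)^{k−1})^k such that for every k×k orthogonal matrix U there exists U'' ∈ R with (U''[:,i])^t U[:,i] > 1 − 12.5kε for every column i, and (U''[:,i])^t U[:,j] < 10(√2+1)√(kε) for all j ≠ i. -/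
open Matrix Finset

private lemma floor_close {δ : ℝ} (hδ : 0 < δ) {x y : ℝ} (h : ⌊x/δ⌋ = ⌊y/δ⌋) : |x - y| < δ := by
  have h1 : x < (⌊y/δ⌋ + 1) * δ := by
    have := Int.lt_floor_add_one (x/δ); rw [h] at this
    calc x = (x/δ)*δ := by field_simp
    _ < (⌊y/δ⌋+1)*δ := by apply mul_lt_mul_of_pos_right; exact_mod_cast this; exact hδ
  have h2 : (⌊y/δ⌋:ℝ) * δ ≤ y := by
    have := Int.floor_le (y/δ)
    calc (⌊y/δ⌋:ℝ)*δ ≤ (y/δ)*δ := mul_le_mul_of_nonneg_right this hδ.le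
    _ = y := by field_simp
  have h3 : y < (⌊y/δ⌋ + 1) * δ := by
    have := Int.lt_floor_add_one (y/δ)
    calc y = (y/δ)*δ := by field_simp
    _ < (⌊y/δ⌋+1)*δ := by apply mul_lt_mul_of_pos_right; exact_mod_cast this; exact hδ
  have h4 : (⌊y/δ⌋:ℝ) * δ ≤ x := by
    have := Int.floor_le (x/δ); rw [h] at this
    calc (⌊y/δ⌋:ℝ)*δ ≤ (x/δ)*δ := mul_le_mul_of_nonneg_right this hδ.le
    _ = x := by field_simp
  rw [abs_sub_lt_iff]; constructor <;> nlinarith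

set_option maxHeartbeats 1000000 in
/-- An `ε`-net for the `k×k` orthogonal matrices: a finite set `R` of orthogonal matrices of
size at most `(2k·e^{εk/2}·(2/ε)^{k−1})^k` such that every orthogonal `U` has some `U'' ∈ R`
whose columns are nearly aligned with the corresponding columns of `U`:
`(U''[:,i])ᵗU[:,i] > 1 − 12.5kε` and `(U''[:,i])ᵗU[:,j] < 10(√2+1)√(kε)` for `j ≠ i`. -/
theorem stmt15 (k : ℕ) (hk : 0 < k) (ε : ℝ) (hε : 0 < ε)
    (hε' : ε ≤ 1 / (k * (4 * Real.sqrt 2 + 4))) :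
    ∃ R : Finset (Matrix (Fin k) (Fin k) ℝ),
      (∀ A ∈ R, Aᵀ * A = 1) ∧
      (R.card : ℝ) ≤ (2 * k * Real.exp (ε * k / 2) * (2 / ε) ^ (k - 1)) ^ k ∧
      ∀ U : Matrix (Fin k) (Fin k) ℝ, Uᵀ * U = 1 →
        ∃ U'' ∈ R,
          (∀ i : Fin k, 1 - 12.5 * k * ε < ∑ r : Fin k, U'' r i * U r i) ∧
          (∀ i j : Fin k, j ≠ i →
            ∑ r : Fin k, U'' r i * U r j < 10 * (Real.sqrt 2 + 1) * Real.sqrt (k * ε)) := by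
  classical
  have hk1 : (1:ℝ) ≤ (k:ℝ) := by exact_mod_cast hk
  have hs2 : (1:ℝ) ≤ Real.sqrt 2 := by
    nlinarith [Real.sq_sqrt (by norm_num : (2:ℝ) ≥ 0), Real.sqrt_nonneg 2]
  have hε8 : ε ≤ 1/8 := by
    have hden : (8:ℝ) ≤ (k:ℝ) * (4 * Real.sqrt 2 + 4) := by nlinarith
    calc ε ≤ 1 / ((k:ℝ) * (4 * Real.sqrt 2 + 4)) := hε'
    _ ≤ 1/8 := by apply one_div_le_one_div_of_le <;> linarith
  have hsε : Real.sqrt ε ≤ 3/4 := by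
    nlinarith [Real.sq_sqrt hε.le, Real.sqrt_nonneg ε]
  have hsεpos : 0 < Real.sqrt ε := Real.sqrt_pos.2 hε
  have hexp1 : (1:ℝ) ≤ Real.exp (ε * k / 2) := by
    have h := Real.add_one_le_exp (ε * (k:ℝ) / 2)
    have h0 : 0 ≤ ε * (k:ℝ) / 2 := by positivity
    linarith
  have hdiag : ∀ (V : Matrix (Fin k) (Fin k) ℝ), Vᵀ * V = 1 → ∀ i,
      ∑ r : Fin k, V r i * V r i = 1 := by
    intro V hV i
    have h0 := congrFun (congrFun hV i) i
    rw [Matrix.mul_apply] at h0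
    simp only [Matrix.transpose_apply] at h0
    rw [Matrix.one_apply_eq] at h0
    exact h0
  have hoff : ∀ (V : Matrix (Fin k) (Fin k) ℝ), Vᵀ * V = 1 → ∀ i j, i ≠ j →
      ∑ r : Fin k, V r i * V r j = 0 := by
    intro V hV i j hij
    have h0 := congrFun (congrFun hV i) j
    rw [Matrix.mul_apply] at h0
    simp only [Matrix.transpose_apply] at h0
    rw [Matrix.one_apply_ne hij] at h0
    exact h0
  rcases eq_or_lt_of_le (show 1 ≤ k from hk) with h1 | h2
  · -- k = 1
    obtain rfl : k = 1 := h1.symm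
    refine ⟨({1, -1} : Finset (Matrix (Fin 1) (Fin 1) ℝ)), ?_, ?_, ?_⟩
    · intro A hA
      simp only [Finset.mem_insert, Finset.mem_singleton] at hA
      rcases hA with rfl | rfl <;> simp [Matrix.transpose_one]
    · have hcard : (({1, -1} : Finset (Matrix (Fin 1) (Fin 1) ℝ))).card ≤ 2 :=
        (Finset.card_insert_le _ _).trans (by simp)
      have hcard' : ((({1, -1} : Finset (Matrix (Fin 1) (Fin 1) ℝ))).card : ℝ) ≤ 2 := by
        exact_mod_cast hcard
      refine hcard'.trans ?_
      simp only [Nat.cast_one, pow_one]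
      norm_num
      nlinarith [hexp1]
    · intro U hU
      have hU00 : U 0 0 * U 0 0 = 1 := by
        have := hdiag U hU 0
        simpa [Fin.sum_univ_one] using this
      have hUmem : U ∈ ({1, -1} : Finset (Matrix (Fin 1) (Fin 1) ℝ)) := by
        simp only [Finset.mem_insert, Finset.mem_singleton]
        rcases mul_self_eq_one_iff.1 hU00 with h | h
        · left; ext i j; fin_cases i; fin_cases j; simpa [Matrix.one_apply] using h
        · right; ext i j; fin_cases i; fin_cases j; simpa [Matrix.one_apply] using h
      refine ⟨U, hUmem, ?_, ?_⟩
      · intro i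
        rw [hdiag U hU i]
        nlinarith
      · intro i j hij
        exact absurd (Subsingleton.elim j i) hij
  · -- k ≥ 2
    have hk2 : 2 ≤ k := h2
    haveI : Nonempty (Fin k) := ⟨⟨0, hk⟩⟩
    set δ : ℝ := 4 * Real.sqrt ε with hδdef
    have hδ : 0 < δ := by positivity
    have hδsq : δ^2 = 16 * ε := by
      rw [hδdef, mul_pow, Real.sq_sqrt hε.le]; norm_num
    set M : ℤ := ⌊1/δ⌋ with hMdef
    have hM0 : 0 ≤ M := Int.floor_nonneg.2 (by positivity)
    set G : Finset (Fin k → Fin k → ℤ) :=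
      Fintype.piFinset (fun _ => Fintype.piFinset (fun _ => Finset.Icc (-(M+1)) M)) with hGdef
    set f : Matrix (Fin k) (Fin k) ℝ → (Fin k → Fin k → ℤ) :=
      fun U i j => ⌊U i j / δ⌋ with hfdef
    set h : (Fin k → Fin k → ℤ) → Matrix (Fin k) (Fin k) ℝ := fun g =>
      if hg : ∃ U : Matrix (Fin k) (Fin k) ℝ, Uᵀ*U = 1 ∧ f U = g then hg.choose else 1
      with hhdef
    refine ⟨G.image h, ?_, ?_, ?_⟩
    · intro A hA
      obtain ⟨g, -, rfl⟩ := Finset.mem_image.1 hA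
      simp only [hhdef]
      by_cases hg : ∃ U : Matrix (Fin k) (Fin k) ℝ, Uᵀ*U = 1 ∧ f U = g
      · rw [dif_pos hg]; exact hg.choose_spec.1
      · rw [dif_neg hg]; simp [Matrix.transpose_one]
    · -- cardinality
      have hGcard : G.card = ((2*M+2).toNat)^(k*k) := by
        rw [hGdef, Fintype.card_piFinset]
        simp only [Fintype.card_piFinset, Int.card_Icc]
        have he : (M + 1 - -(M+1)) = 2*M+2 := by ring
        rw [he]
        simp [Finset.prod_const, pow_mul]
      have hcastZ : (((2*M+2).toNat : ℤ)) = 2*M+2 := Int.toNat_of_nonneg (by linarith)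
      have hcast : (((2*M+2).toNat : ℕ) : ℝ) = 2*(M:ℝ)+2 := by
        exact_mod_cast congrArg (Int.cast : ℤ → ℝ) hcastZ
      have hMle : (M:ℝ) ≤ 1/δ := Int.floor_le _
      have hXle : (2*(M:ℝ)+2) ≤ 2/Real.sqrt ε := by
        have hd2 : (2:ℝ)/δ = 1/(2*Real.sqrt ε) := by rw [hδdef]; field_simp; ring
        have hb : 2*(M:ℝ)+2 ≤ 2/δ + 2 := by
          have he : (2:ℝ)/δ = 2*(1/δ) := by ring
          rw [he]; linarith
        rw [hd2] at hb
        have h3 : 1/(2*Real.sqrt ε) + 2 ≤ 2/Real.sqrt ε := by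
          rw [div_add' _ _ _ (by positivity), div_le_div_iff₀ (by positivity) hsεpos]
          nlinarith
        linarith
      have hkey : ((2*(M:ℝ)+2))^k ≤ 2 * k * (2/ε)^(k-1) := by
        have hstep : ((2:ℝ)/Real.sqrt ε)^k ≤ 2 * k * (2/ε)^(k-1) := by
          have e1 : ((2:ℝ)/Real.sqrt ε)^k = 2^k / (Real.sqrt ε)^k := div_pow _ _ _
          have epow : (Real.sqrt ε)^(2*(k-1)) = ε^(k-1) := by
            rw [pow_mul, Real.sq_sqrt hε.le]
          have e2 : ((2:ℝ)/ε)^(k-1) = 2^(k-1) / (Real.sqrt ε)^(2*(k-1)) := by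
            rw [div_pow, epow]
          have eR : 2 * (k:ℝ) * (2^(k-1) / (Real.sqrt ε)^(2*(k-1)))
              = (2*(k:ℝ)*2^(k-1)) / (Real.sqrt ε)^(2*(k-1)) := by ring
          rw [e1, e2, eR, div_le_div_iff₀ (by positivity) (by positivity)]
          have harith : 2*(k-1) = k + (k-2) := by omega
          have e3 : (Real.sqrt ε)^(2*(k-1)) = (Real.sqrt ε)^k * (Real.sqrt ε)^(k-2) := by
            rw [harith, pow_add]
          have h6 : (Real.sqrt ε)^(k-2) ≤ 1 := pow_le_one₀ hsεpos.le (by linarith)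
          have h7 : (2:ℝ)^k = 2 * 2^(k-1) := by
            rw [← pow_succ']; congr 1; omega
          calc (2:ℝ)^k * (Real.sqrt ε)^(2*(k-1))
              = 2*2^(k-1)*(Real.sqrt ε)^k * (Real.sqrt ε)^(k-2) := by rw [h7, e3]; ring
          _ ≤ 2*2^(k-1)*(Real.sqrt ε)^k * 1 := by
                apply mul_le_mul_of_nonneg_left h6 (by positivity)
          _ = (2*1)*2^(k-1)*(Real.sqrt ε)^k := by ring
          _ ≤ 2*(k:ℝ)*2^(k-1)*(Real.sqrt ε)^k := by
                have hkk : (2:ℝ)*1 ≤ 2*(k:ℝ) := by linarith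
                exact mul_le_mul_of_nonneg_right
                  (mul_le_mul_of_nonneg_right hkk (by positivity)) (by positivity)
        calc ((2*(M:ℝ)+2))^k ≤ (2/Real.sqrt ε)^k :=
              pow_le_pow_left₀ (by positivity) hXle k
        _ ≤ _ := hstep
      calc ((G.image h).card : ℝ) ≤ (G.card : ℝ) := by exact_mod_cast Finset.card_image_le
      _ = (((2*M+2).toNat : ℕ) : ℝ)^(k*k) := by rw [hGcard]; push_cast; ring
      _ = ((2*(M:ℝ)+2))^(k*k) := by rw [hcast]
      _ = ((2*(M:ℝ)+2)^k)^k := by rw [← pow_mul]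
      _ ≤ (2 * k * (2/ε)^(k-1))^k := pow_le_pow_left₀ (by positivity) hkey k
      _ ≤ (2 * k * Real.exp (ε * k / 2) * (2 / ε) ^ (k - 1)) ^ k := by
            apply pow_le_pow_left₀ (by positivity)
            have he : (2:ℝ) * k * (2/ε)^(k-1) = 2 * k * 1 * (2/ε)^(k-1) := by ring
            rw [he]
            exact mul_le_mul_of_nonneg_right
              (mul_le_mul_of_nonneg_left hexp1 (by positivity)) (by positivity)
    · -- approximation
      intro U hU
      have hentry : ∀ i j : Fin k, |U i j| ≤ 1 := by
        intro i j
        have hsum := hdiag U hU j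
        have hle : U i j * U i j ≤ ∑ r : Fin k, U r j * U r j := by
          apply Finset.single_le_sum (f := fun r => U r j * U r j)
          · intro r _; exact mul_self_nonneg _
          · exact Finset.mem_univ i
        rw [hsum] at hle
        exact abs_le_one_iff_mul_self_le_one.2 hle
      have hfG : f U ∈ G := by
        rw [hGdef, Fintype.mem_piFinset]
        intro i
        rw [Fintype.mem_piFinset]
        intro j
        rw [Finset.mem_Icc]
        constructor
        · apply Int.le_floor.2
          have hge : -(1:ℝ) ≤ U i j := by linarith [(abs_le.1 (hentry i j)).1]
          have hlt : (1:ℝ)/δ < (M:ℝ) + 1 := by exact_mod_cast Int.lt_floor_add_one (1/δ)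
          have hdd : -(1:ℝ)/δ ≤ U i j / δ := by gcongr
          have hnd : (-1:ℝ)/δ = -(1/δ) := by ring
          push_cast
          linarith
        · apply Int.floor_le_floor
          gcongr
          exact (abs_le.1 (hentry i j)).2
      have hex : ∃ V : Matrix (Fin k) (Fin k) ℝ, Vᵀ*V = 1 ∧ f V = f U := ⟨U, hU, rfl⟩
      have hhval : h (f U) = hex.choose := by simp only [hhdef]; exact dif_pos hex
      obtain ⟨hV1, hV2⟩ := hex.choose_spec
      set V := hex.choose with hVdef
      have hVmem : V ∈ G.image h := Finset.mem_image.2 ⟨f U, hfG, hhval⟩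
      have hclose : ∀ i j : Fin k, |V i j - U i j| < δ := by
        intro i j
        apply floor_close hδ
        exact congrFun (congrFun hV2 i) j
      have hS : ∀ i : Fin k, ∑ r : Fin k, (V r i - U r i)^2 < 16 * k * ε := by
        intro i
        calc ∑ r : Fin k, (V r i - U r i)^2 < ∑ _r : Fin k, δ^2 := by
              apply Finset.sum_lt_sum_of_nonempty Finset.univ_nonempty
              intro r _
              nlinarith [abs_nonneg (V r i - U r i), sq_abs (V r i - U r i),
                abs_lt.1 (hclose r i)]
        _ = k * δ^2 := by
              rw [Finset.sum_const, Finset.card_univ, Fintype.card_fin, nsmul_eq_mul]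
        _ = 16 * k * ε := by rw [hδsq]; ring
      refine ⟨V, hVmem, ?_, ?_⟩
      · intro i
        have hid : ∑ r : Fin k, V r i * U r i
            = (∑ r : Fin k, V r i * V r i + ∑ r : Fin k, U r i * U r i
               - ∑ r : Fin k, (V r i - U r i)^2) / 2 := by
          rw [← Finset.sum_add_distrib, ← Finset.sum_sub_distrib, Finset.sum_div]
          apply Finset.sum_congr rfl
          intro r _; ring
        rw [hid, hdiag V hV1 i, hdiag U hU i]
        have hSi := hS i
        have hkε : (0:ℝ) < (k:ℝ) * ε := by positivity
        nlinarith
      · intro i j hij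
        have hsplit : ∑ r : Fin k, V r i * U r j
            = (∑ r : Fin k, (V r i - U r i) * U r j) + ∑ r : Fin k, U r i * U r j := by
          rw [← Finset.sum_add_distrib]
          apply Finset.sum_congr rfl
          intro r _; ring
        rw [hsplit, hoff U hU i j (fun hh => hij hh.symm), add_zero]
        have huj := hdiag U hU j
        have hCS := Finset.sum_mul_sq_le_sq_mul_sq Finset.univ
          (fun r => V r i - U r i) (fun r => U r j)
        have hujsq : ∑ r : Fin k, (U r j)^2 = 1 := by
          rw [← huj]; apply Finset.sum_congr rfl; intro r _; ring
        simp only [hujsq, mul_one] at hCS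
        have hT2 : (∑ r : Fin k, (V r i - U r i) * U r j)^2 < 16 * k * ε :=
          lt_of_le_of_lt hCS (hS i)
        have hB : (0:ℝ) ≤ 10 * (Real.sqrt 2 + 1) * Real.sqrt (k * ε) := by positivity
        have hBsq : (10 * (Real.sqrt 2 + 1) * Real.sqrt (k * ε))^2
            = 100 * (Real.sqrt 2 + 1)^2 * (k * ε) := by
          rw [mul_pow, mul_pow, Real.sq_sqrt (by positivity)]; norm_num
        have hkε : (0:ℝ) < (k:ℝ) * ε := by positivity
        have hlt : (∑ r : Fin k, (V r i - U r i) * U r j)^2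
            < (10 * (Real.sqrt 2 + 1) * Real.sqrt (k * ε))^2 := by
          rw [hBsq]
          have h4 : (4:ℝ) ≤ (Real.sqrt 2 + 1)^2 := by nlinarith
          nlinarith [mul_le_mul_of_nonneg_right h4 hkε.le]
        calc ∑ r : Fin k, (V r i - U r i) * U r j
            ≤ |∑ r : Fin k, (V r i - U r i) * U r j| := le_abs_self _
        _ < _ := abs_lt_of_sq_lt_sq hlt hB
end
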